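/- arXiv:1105.0937 — 3 statements merged into one kernel-verified Lean document; each statement's English description precedes it below -/
import Mathlib

section
/- Let V : ℤ² → [0,∞) and suppose that the series Σ_{x∈ℤ²} V(x) diverges (is not summable). Then there exists a sequence (ψ_n)_{n≥1} of nonzero finitely supported functions ℤ² → ℂ with pairwise disjoint supports such that Q_V(ψ_n) < 0 for every n; in particular, for every N there is an N-dimensional subspace of finitely supported functions on which Q_V is negative definite. -/
/-- Quadratic form of the two-dimensional lattice Schrödinger operator `H = -Δ - V`
on finitely supported functions `ℤ² → ℂ`. -/
noncomputable def latticeForm2D (V : ℤ × ℤ → ℝ) (ψ : ℤ × ℤ → ℂ) : ℝ :=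
  (∑' x : ℤ × ℤ, (‖ψ (x.1 + 1, x.2) - ψ x‖ ^ 2 + ‖ψ (x.1, x.2 + 1) - ψ x‖ ^ 2)) -
    ∑' x : ℤ × ℤ, V x * ‖ψ x‖ ^ 2

namespace Lattice2DAux

/-- ℓ∞ distance to the origin on `ℤ²`. -/
def dd (x : ℤ × ℤ) : ℕ := max x.1.natAbs x.2.natAbs

/-- Increment of the radial profile. -/
noncomputable def del (r ρ m : ℕ) : ℝ :=
  (if r ≤ m ∧ m < 2*r then ((r:ℝ))⁻¹ else 0) - (if ρ ≤ m ∧ m < 2*ρ then ((ρ:ℝ))⁻¹ else 0)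

/-- Radial profile: `0` for `k ≤ r`, linear ramp up to `1` on `[r, 2r]`,
plateau `1` on `[2r, ρ]`, linear ramp down to `0` on `[ρ, 2ρ]`. -/
noncomputable def prof (r ρ k : ℕ) : ℝ := ∑ j ∈ Finset.range k, del r ρ j

/-- The test function: radial tent supported in the annulus `r < ‖x‖∞ < 2ρ`. -/
noncomputable def tf (r ρ : ℕ) (x : ℤ × ℤ) : ℂ := ((prof r ρ (dd x) : ℝ) : ℂ)

lemma prof_succ (r ρ m : ℕ) : prof r ρ (m+1) = prof r ρ m + del r ρ m :=
  Finset.sum_range_succ _ _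

lemma prof_low (r ρ k : ℕ) (hρ : 2*r ≤ ρ) (hk : k ≤ r) : prof r ρ k = 0 := by
  apply Finset.sum_eq_zero
  intro j hj
  rw [Finset.mem_range] at hj
  have h1 : ¬ (r ≤ j ∧ j < 2*r) := by omega
  have h2 : ¬ (ρ ≤ j ∧ j < 2*ρ) := by omega
  simp [del, h1, h2]

lemma sum_ind (c : ℝ) (a b k : ℕ) (h : b ≤ k) :
    ∑ j ∈ Finset.range k, (if a ≤ j ∧ j < b then c else 0) = ((b - a : ℕ) : ℝ) * c := by
  have e : ∀ j, (if a ≤ j ∧ j < b then c else 0) = if j ∈ Finset.Ico a b then c else 0 := by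
    intro j; simp [Finset.mem_Ico]
  simp_rw [e]
  rw [Finset.sum_ite_mem]
  have hsub : Finset.range k ∩ Finset.Ico a b = Finset.Ico a b := by
    apply Finset.inter_eq_right.2
    intro j hj
    rw [Finset.mem_Ico] at hj
    rw [Finset.mem_range]; omega
  rw [hsub, Finset.sum_const, Nat.card_Ico, nsmul_eq_mul]

lemma prof_sub (r ρ k : ℕ) : prof r ρ k =
    (∑ j ∈ Finset.range k, (if r ≤ j ∧ j < 2*r then ((r:ℝ))⁻¹ else 0)) -
    (∑ j ∈ Finset.range k, (if ρ ≤ j ∧ j < 2*ρ then ((ρ:ℝ))⁻¹ else 0)) := by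
  rw [prof]
  simp only [del]
  rw [Finset.sum_sub_distrib]

lemma prof_one (r ρ k : ℕ) (hr : 1 ≤ r) (hρ : 2*r ≤ ρ) (h1 : 2*r ≤ k) (h2 : k ≤ ρ) :
    prof r ρ k = 1 := by
  rw [prof_sub, sum_ind _ _ _ _ h1]
  have h3 : ∑ j ∈ Finset.range k, (if ρ ≤ j ∧ j < 2*ρ then ((ρ:ℝ))⁻¹ else 0) = 0 := by
    apply Finset.sum_eq_zero
    intro j hj
    rw [Finset.mem_range] at hj
    have : ¬ (ρ ≤ j ∧ j < 2*ρ) := by omega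
    simp [this]
  rw [h3]
  have e : (2*r - r : ℕ) = r := by omega
  rw [e]
  have hr0 : (r:ℝ) ≠ 0 := by positivity
  field_simp
  norm_num

lemma prof_high (r ρ k : ℕ) (hr : 1 ≤ r) (hρ : 2*r ≤ ρ) (hk : 2*ρ ≤ k) : prof r ρ k = 0 := by
  rw [prof_sub, sum_ind _ _ _ _ (by omega), sum_ind _ _ _ _ (by omega)]
  have e1 : (2*r - r : ℕ) = r := by omega
  have e2 : (2*ρ - ρ : ℕ) = ρ := by omega
  rw [e1, e2]
  have hr0 : (r:ℝ) ≠ 0 := by positivity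
  have hρ1 : 1 ≤ ρ := by omega
  have hρ0 : (ρ:ℝ) ≠ 0 := by positivity
  field_simp
  norm_num

lemma del_sq (r ρ m : ℕ) (hρ : 2*r ≤ ρ) :
    (del r ρ m)^2 ≤ if m < 2*r then ((r:ℝ)⁻¹)^2 else ((ρ:ℝ)⁻¹)^2 := by
  by_cases h : m < 2*r
  · have h2 : ¬ (ρ ≤ m ∧ m < 2*ρ) := by omega
    simp only [del, h2, if_false, if_pos h, sub_zero]
    split_ifs with h3
    · exact le_refl _
    · simpa using sq_nonneg ((r:ℝ)⁻¹)
  · have h1 : ¬ (r ≤ m ∧ m < 2*r) := by omega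
    simp only [del, h1, if_false, if_neg h, zero_sub, neg_sq]
    split_ifs with h3
    · exact le_refl _
    · simpa using sq_nonneg ((ρ:ℝ)⁻¹)

lemma edge (r ρ : ℕ) (hr : 1 ≤ r) (hρ : 2*r ≤ ρ) {j k : ℕ} (h1 : j ≤ k + 1) (h2 : k ≤ j + 1) :
    (prof r ρ j - prof r ρ k)^2 ≤
      (if k ≤ 2*r then ((r:ℝ)⁻¹)^2 else 0) + ((ρ:ℝ)⁻¹)^2 := by
  have hrpos : (0:ℝ) < r := by positivity
  have hρ1 : 1 ≤ ρ := by omega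
  have hρpos : (0:ℝ) < ρ := by positivity
  have hA : (0:ℝ) ≤ if k ≤ 2*r then ((r:ℝ)⁻¹)^2 else 0 := by
    split_ifs <;> positivity
  rcases (by omega : j = k ∨ j = k + 1 ∨ k = j + 1) with h | h | h
  · rw [h, sub_self]
    nlinarith [sq_nonneg ((ρ:ℝ)⁻¹)]
  · rw [h, prof_succ]
    have e : prof r ρ k + del r ρ k - prof r ρ k = del r ρ k := by ring
    rw [e]
    have hb := del_sq r ρ k hρ
    split_ifs at hb ⊢ <;>
      first
        | omega
        | nlinarith [sq_nonneg ((r:ℝ)⁻¹), sq_nonneg ((ρ:ℝ)⁻¹)]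
  · rw [h, prof_succ]
    have e : (prof r ρ j - (prof r ρ j + del r ρ j))^2 = (del r ρ j)^2 := by ring
    rw [e]
    have hb := del_sq r ρ j hρ
    split_ifs at hb ⊢ <;>
      first
        | omega
        | nlinarith [sq_nonneg ((r:ℝ)⁻¹), sq_nonneg ((ρ:ℝ)⁻¹)]

/-- The box of radius `R` around the origin as a finite set. -/
noncomputable def box (R : ℕ) : Finset (ℤ × ℤ) := Finset.Icc (-(R:ℤ), -(R:ℤ)) ((R:ℤ), (R:ℤ))

lemma mem_box {R : ℕ} {x : ℤ × ℤ} : x ∈ box R ↔ dd x ≤ R := by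
  simp only [box, Finset.mem_Icc, Prod.le_def, dd]; omega

lemma card_box (R : ℕ) : (box R).card = (2*R+1)^2 := by
  rw [box, Finset.card_Icc_prod]
  simp only [Int.card_Icc]
  have : ((R:ℤ) + 1 - -(R:ℤ)).toNat = 2*R+1 := by omega
  rw [this]; ring

lemma dd_e1 (x : ℤ × ℤ) : dd (x.1 + 1, x.2) ≤ dd x + 1 ∧ dd x ≤ dd (x.1 + 1, x.2) + 1 := by
  simp only [dd]; omega

lemma dd_e2 (x : ℤ × ℤ) : dd (x.1, x.2 + 1) ≤ dd x + 1 ∧ dd x ≤ dd (x.1, x.2 + 1) + 1 := by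
  simp only [dd]; omega

lemma tf_norm_sq (r ρ : ℕ) (a b : ℤ × ℤ) :
    ‖tf r ρ a - tf r ρ b‖^2 = (prof r ρ (dd a) - prof r ρ (dd b))^2 := by
  rw [tf, tf, ← Complex.ofReal_sub, Complex.norm_real, Real.norm_eq_abs, sq_abs]

lemma ksum_le (r ρ : ℕ) (hr : 1 ≤ r) (hρ : 2*r ≤ ρ) (x : ℤ × ℤ) :
    ‖tf r ρ (x.1 + 1, x.2) - tf r ρ x‖ ^ 2 + ‖tf r ρ (x.1, x.2 + 1) - tf r ρ x‖ ^ 2 ≤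
      2 * ((if dd x ≤ 2*r then ((r:ℝ)⁻¹)^2 else 0) + ((ρ:ℝ)⁻¹)^2) := by
  rw [tf_norm_sq, tf_norm_sq]
  have h1 := edge r ρ hr hρ (dd_e1 x).1 (dd_e1 x).2
  have h2 := edge r ρ hr hρ (dd_e2 x).1 (dd_e2 x).2
  linarith

lemma tf_zero_of_far (r ρ : ℕ) (hr : 1 ≤ r) (hρ : 2*r ≤ ρ) {x : ℤ × ℤ} (hx : 2*ρ ≤ dd x) :
    tf r ρ x = 0 := by
  rw [tf, prof_high r ρ _ hr hρ hx, Complex.ofReal_zero]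

lemma card_bound (R : ℕ) (hR : 1 ≤ R) : (((box (2*R)).card : ℕ) : ℝ) * ((R:ℝ)⁻¹)^2 ≤ 25 := by
  rw [card_box]
  have hRR : (1:ℝ) ≤ R := by exact_mod_cast hR
  have h4 : (0:ℝ) < R := by linarith
  have key : ((2*(2*R)+1:ℕ):ℝ) * (R:ℝ)⁻¹ ≤ 5 := by
    rw [← div_eq_mul_inv, div_le_iff₀ h4]
    push_cast
    linarith
  have hnn : (0:ℝ) ≤ ((2*(2*R)+1:ℕ):ℝ) * (R:ℝ)⁻¹ := by positivity
  calc (((2*(2*R)+1)^2:ℕ):ℝ) * ((R:ℝ)⁻¹)^2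
      = (((2*(2*R)+1:ℕ):ℝ) * (R:ℝ)⁻¹)^2 := by push_cast; ring
    _ ≤ 5^2 := by nlinarith
    _ = 25 := by norm_num

lemma kin_le (r ρ : ℕ) (hr : 1 ≤ r) (hρ : 2*r ≤ ρ) :
    (∑' x : ℤ × ℤ, (‖tf r ρ (x.1 + 1, x.2) - tf r ρ x‖ ^ 2
        + ‖tf r ρ (x.1, x.2 + 1) - tf r ρ x‖ ^ 2)) ≤ 100 := by
  have hρ1 : 1 ≤ ρ := by omega
  have hzero : ∀ x : ℤ × ℤ, x ∉ box (2*ρ) →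
      (‖tf r ρ (x.1 + 1, x.2) - tf r ρ x‖ ^ 2
        + ‖tf r ρ (x.1, x.2 + 1) - tf r ρ x‖ ^ 2) = 0 := by
    intro x hx
    rw [mem_box] at hx
    push_neg at hx
    have e0 : tf r ρ x = 0 := tf_zero_of_far r ρ hr hρ (by omega)
    have e1 : tf r ρ (x.1 + 1, x.2) = 0 :=
      tf_zero_of_far r ρ hr hρ (by have := (dd_e1 x).2; omega)
    have e2 : tf r ρ (x.1, x.2 + 1) = 0 :=
      tf_zero_of_far r ρ hr hρ (by have := (dd_e2 x).2; omega)
    rw [e0, e1, e2]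
    simp
  rw [tsum_eq_sum hzero]
  have hle := Finset.sum_le_sum (fun x (_ : x ∈ box (2*ρ)) => ksum_le r ρ hr hρ x)
  refine le_trans hle ?_
  rw [← Finset.mul_sum, Finset.sum_add_distrib, Finset.sum_const, nsmul_eq_mul]
  have hA : ∑ x ∈ box (2*ρ), (if dd x ≤ 2*r then ((r:ℝ)⁻¹)^2 else 0) ≤ 25 := by
    rw [← Finset.sum_filter]
    have hsub : (box (2*ρ)).filter (fun x => dd x ≤ 2*r) ⊆ box (2*r) := by
      intro x hx
      rw [Finset.mem_filter] at hx
      exact mem_box.2 hx.2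
    refine le_trans (Finset.sum_le_sum_of_subset_of_nonneg hsub
      (fun x _ _ => by positivity)) ?_
    rw [Finset.sum_const, nsmul_eq_mul]
    exact card_bound r hr
  have hB : ((box (2*ρ)).card : ℝ) * ((ρ:ℝ)⁻¹)^2 ≤ 25 := card_bound ρ hρ1
  linarith

lemma pot_ge (V : ℤ × ℤ → ℝ) (hV0 : ∀ x, 0 ≤ V x) (r ρ : ℕ) (hr : 1 ≤ r) (hρ : 2*r ≤ ρ)
    (F : Finset (ℤ × ℤ)) (hF : ∀ x ∈ F, 2*r ≤ dd x ∧ dd x ≤ ρ) :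
    ∑ x ∈ F, V x ≤ ∑' x : ℤ × ℤ, V x * ‖tf r ρ x‖ ^ 2 := by
  have hsummable : Summable (fun x : ℤ × ℤ => V x * ‖tf r ρ x‖ ^ 2) := by
    apply summable_of_ne_finset_zero (s := box (2*ρ))
    intro x hx
    rw [mem_box] at hx
    push_neg at hx
    rw [tf_zero_of_far r ρ hr hρ (by omega)]
    simp
  have heq : ∑ x ∈ F, V x = ∑ x ∈ F, V x * ‖tf r ρ x‖ ^ 2 := by
    apply Finset.sum_congr rfl
    intro x hx
    have h := hF x hx
    rw [tf, prof_one r ρ _ hr hρ h.1 h.2]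
    norm_num
  rw [heq]
  exact Summable.sum_le_tsum F (fun x _ => mul_nonneg (hV0 x) (by positivity)) hsummable

lemma form_neg (V : ℤ × ℤ → ℝ) (hV0 : ∀ x, 0 ≤ V x) (r ρ : ℕ) (hr : 1 ≤ r) (hρ : 2*r ≤ ρ)
    (F : Finset (ℤ × ℤ)) (hF : ∀ x ∈ F, 2*r ≤ dd x ∧ dd x ≤ ρ)
    (hFV : (100:ℝ) < ∑ x ∈ F, V x) :
    latticeForm2D V (tf r ρ) < 0 := by
  have h1 := kin_le r ρ hr hρ
  have h2 := pot_ge V hV0 r ρ hr hρ F hF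
  rw [latticeForm2D]
  linarith

lemma tf_ne_zero (r ρ : ℕ) (hr : 1 ≤ r) (hρ : 2*r ≤ ρ) : tf r ρ ≠ 0 := by
  intro h
  have h1 : tf r ρ (((2*r : ℕ) : ℤ), 0) = 0 := by rw [h]; rfl
  rw [tf] at h1
  have hdd : dd (((2*r : ℕ) : ℤ), 0) = 2*r := by simp only [dd]; omega
  rw [hdd, prof_one r ρ _ hr hρ le_rfl hρ] at h1
  simp at h1

lemma tf_support (r ρ : ℕ) (hr : 1 ≤ r) (hρ : 2*r ≤ ρ) :
    Function.support (tf r ρ) ⊆ {x : ℤ × ℤ | r < dd x ∧ dd x < 2*ρ} := by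
  intro x hx
  simp only [Function.mem_support] at hx
  constructor
  · by_contra h
    push_neg at h
    exact hx (by rw [tf, prof_low r ρ _ hρ h]; simp)
  · by_contra h
    push_neg at h
    exact hx (tf_zero_of_far r ρ hr hρ h)

lemma tf_support_finite (r ρ : ℕ) (hr : 1 ≤ r) (hρ : 2*r ≤ ρ) :
    (Function.support (tf r ρ)).Finite := by
  apply Set.Finite.subset (box (2*ρ)).finite_toSet
  intro x hx
  have h2 : r < dd x ∧ dd x < 2*ρ := tf_support r ρ hr hρ hx
  exact mem_box.2 (by omega)

end Lattice2DAux

/-- If `Σ_{x∈ℤ²} V(x) = ∞`, then the two-dimensional lattice Schrödinger operator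
`-Δ - V` has infinitely many negative eigenvalues: there is a sequence of nonzero
finitely supported functions with pairwise disjoint supports on which the quadratic
form is negative. -/
theorem infinitely_many_negative_eigenvalues_lattice_2d
    (V : ℤ × ℤ → ℝ) (hV0 : ∀ x, 0 ≤ V x)
    (hdiv : ¬ Summable V) :
    ∃ ψ : ℕ → ℤ × ℤ → ℂ,
      (∀ n, ψ n ≠ 0 ∧ (Function.support (ψ n)).Finite ∧ latticeForm2D V (ψ n) < 0) ∧
      ∀ m n, m ≠ n → Disjoint (Function.support (ψ m)) (Function.support (ψ n)) := by
  classical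
  open Lattice2DAux in
  -- key step: for every `r` there is an outer radius `ρ` and a finite set `F` in the
  -- annulus `2r ≤ dd x ≤ ρ` carrying potential mass `> 100`.
  have key : ∀ r : ℕ, ∃ q : ℕ × Finset (ℤ × ℤ), 2*r ≤ q.1 ∧
      (∀ x ∈ q.2, 2*r ≤ dd x ∧ dd x ≤ q.1) ∧ (100:ℝ) < ∑ x ∈ q.2, V x := by
    intro r
    set W : ℤ × ℤ → ℝ := fun x => if 2*r ≤ dd x then V x else 0 with hW
    have hWns : ¬ Summable W := by
      intro hWs
      apply hdiv
      have h2 : Summable (fun x : ℤ × ℤ => if 2*r ≤ dd x then 0 else V x) := by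
        apply summable_of_ne_finset_zero (s := box (2*r))
        intro x hx
        rw [mem_box] at hx
        push_neg at hx
        rw [if_pos (by omega)]
      have := hWs.add h2
      convert this using 1
      funext x
      simp only [hW, Pi.add_apply]
      split_ifs <;> ring
    have hbig : ∃ u : Finset (ℤ × ℤ), (100:ℝ) < ∑ x ∈ u, W x := by
      by_contra hcon
      push_neg at hcon
      exact hWns (summable_of_sum_le (fun x => by
        simp only [hW]; split_ifs; exacts [hV0 x, le_refl 0]) hcon)
    obtain ⟨u, hu⟩ := hbig
    set F : Finset (ℤ × ℤ) := u.filter (fun x => 2*r ≤ dd x) with hF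
    have hsum : ∑ x ∈ F, V x = ∑ x ∈ u, W x := by
      rw [hF, Finset.sum_filter]
    refine ⟨(max (2*r) (F.sup dd), F), le_max_left _ _, ?_, by rw [hsum]; exact hu⟩
    intro x hx
    have hx2 : 2*r ≤ dd x := (Finset.mem_filter.1 hx).2
    exact ⟨hx2, le_trans (Finset.le_sup (f := dd) hx) (le_max_right _ _)⟩
  choose g hg1 hg2 hg3 using key
  -- the sequence of inner radii
  let rs : ℕ → ℕ := fun n => Nat.rec 1 (fun _ r => 2 * (g r).1) n
  have rs_succ : ∀ n, rs (n+1) = 2 * (g (rs n)).1 := fun n => rfl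
  have rs_pos : ∀ n, 1 ≤ rs n := by
    intro n
    induction n with
    | zero => exact le_refl 1
    | succ n ih =>
      rw [rs_succ]
      have := hg1 (rs n)
      omega
  have rs_mono : Monotone rs := by
    apply monotone_nat_of_le_succ
    intro n
    rw [rs_succ]
    have := hg1 (rs n)
    have := rs_pos n
    omega
  refine ⟨fun n => Lattice2DAux.tf (rs n) ((g (rs n)).1), ?_, ?_⟩
  · intro n
    have hr : 1 ≤ rs n := rs_pos n
    have hρ : 2 * rs n ≤ (g (rs n)).1 := hg1 (rs n)
    exact ⟨Lattice2DAux.tf_ne_zero _ _ hr hρ, Lattice2DAux.tf_support_finite _ _ hr hρ,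
      Lattice2DAux.form_neg V hV0 _ _ hr hρ (g (rs n)).2 (hg2 (rs n)) (hg3 (rs n))⟩
  · intro m n hmn
    have main : ∀ m n, m < n →
        Disjoint (Function.support (Lattice2DAux.tf (rs m) ((g (rs m)).1)))
          (Function.support (Lattice2DAux.tf (rs n) ((g (rs n)).1))) := by
      intro m n h
      rw [Set.disjoint_left]
      intro x hxm hxn
      have h1 : rs m < Lattice2DAux.dd x ∧ Lattice2DAux.dd x < 2 * (g (rs m)).1 :=
        Lattice2DAux.tf_support _ _ (rs_pos m) (hg1 (rs m)) hxm
      have h2 : rs n < Lattice2DAux.dd x ∧ Lattice2DAux.dd x < 2 * (g (rs n)).1 :=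
        Lattice2DAux.tf_support _ _ (rs_pos n) (hg1 (rs n)) hxn
      have h3 : 2 * (g (rs m)).1 ≤ rs n :=
        le_trans (le_of_eq (rs_succ m).symm) (rs_mono (Nat.succ_le_of_lt h))
      omega
    rcases Nat.lt_or_ge m n with h | h
    · exact main m n h
    · exact (main n m (by omega)).symm
end

section
/- Let d ∈ {1,2}, let y ∈ ℤ^d and α > 0, and let H be the bounded self-adjoint operator on ℓ²(ℤ^d) defined by (Hψ)(x) = Σ_{x′∈ℤ^d : ‖x−x′‖₁ = 1} (ψ(x) − ψ(x′)) − α·(ψ(y) if x = y, else 0). Then there exists exactly one λ < 0 that is an eigenvalue of H, and the corresponding eigenspace {ψ ∈ ℓ²(ℤ^d) : Hψ = λψ} is one-dimensional. -/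
/-- Number of ±1 walks of length `n` on `ℤ` from `k` to `0`. -/
def oneD : ℕ → ℤ → ℕ
  | 0, k => if k = 0 then 1 else 0
  | n + 1, k => oneD n (k - 1) + oneD n (k + 1)

lemma oneD_eval : ∀ (n : ℕ) (k : ℤ), oneD n k =
    if (n + k) % 2 = 0 ∧ 0 ≤ (n : ℤ) + k then n.choose (((n : ℤ) + k) / 2).toNat else 0 := by
  intro n
  induction n with
  | zero =>
    intro k
    simp only [oneD, Nat.cast_zero, zero_add]
    by_cases hk : k = 0
    · simp [hk]
    · rw [if_neg hk]
      rcases lt_or_gt_of_ne hk with h | h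
      · rw [if_neg (by omega)]
      · by_cases hp : k % 2 = 0
        · rw [if_pos ⟨hp, by omega⟩]
          exact (Nat.choose_eq_zero_of_lt (by omega)).symm
        · rw [if_neg (by tauto)]
  | succ n ih =>
    intro k
    rw [oneD, ih, ih]
    push_cast
    have hpar : ((n : ℤ) + 1 + k) % 2 = ((n : ℤ) + (k - 1)) % 2 := by omega
    have hpar2 : ((n : ℤ) + (k + 1)) % 2 = ((n : ℤ) + (k - 1)) % 2 := by omega
    by_cases hp : ((n : ℤ) + 1 + k) % 2 = 0
    · have hp1 : ((n : ℤ) + (k - 1)) % 2 = 0 := by omega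
      have hp2 : ((n : ℤ) + (k + 1)) % 2 = 0 := by omega
      set S : ℤ := (n : ℤ) + 1 + k with hS
      rcases lt_trichotomy S 0 with hneg | hzero | hpos
      · rw [if_neg (by omega), if_neg (by omega), if_neg (by omega)]
      · rw [if_neg (by omega), if_pos ⟨hp2, by omega⟩, if_pos ⟨hp, by omega⟩]
        have h2 : (((n : ℤ) + (k + 1)) / 2).toNat = 0 := by omega
        have h1 : (((n : ℤ) + 1 + k) / 2).toNat = 0 := by omega
        rw [h1, h2]; simp
      · have hS2 : 2 ≤ S := by omega
        rw [if_pos ⟨hp1, by omega⟩, if_pos ⟨hp2, by omega⟩, if_pos ⟨hp, by omega⟩]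
        have h1 : (((n : ℤ) + 1 + k) / 2).toNat = (S / 2).toNat := by omega
        have h2 : (((n : ℤ) + (k - 1)) / 2).toNat = (S / 2).toNat - 1 := by omega
        have h3 : (((n : ℤ) + (k + 1)) / 2).toNat = (S / 2).toNat := by omega
        rw [h1, h2, h3]
        obtain ⟨j, hj⟩ : ∃ j, (S / 2).toNat = j + 1 := ⟨(S / 2).toNat - 1, by omega⟩
        rw [hj]
        simp only [Nat.add_sub_cancel]
        rw [Nat.choose_succ_succ']
    · rw [if_neg (by omega), if_neg (by omega), if_neg (by omega)]

lemma oneD_two_mul_zero (m : ℕ) : oneD (2 * m) 0 = m.centralBinom := by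
  rw [oneD_eval]
  have h : (((2 * m : ℕ) : ℤ) + 0) / 2 = (m : ℤ) := by push_cast; omega
  rw [if_pos ⟨by push_cast; omega, by positivity⟩, h]
  simp [Nat.centralBinom]

/-- Key inequality: `16^m ≤ 4 m (centralBinom m)^2` for `m ≥ 1`. -/
lemma sixteen_pow_le (m : ℕ) (hm : 1 ≤ m) : 16 ^ m ≤ 4 * m * m.centralBinom ^ 2 := by
  induction m with
  | zero => omega
  | succ n ih =>
    rcases Nat.lt_or_ge n 1 with h | hn
    · have : n = 0 := by omega
      subst this
      decide
    · have IH := ih hn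
      have key := Nat.succ_mul_centralBinom_succ n
      have expand : (n+1)^2 * (n+1).centralBinom ^ 2 = 4 * (2*n+1)^2 * n.centralBinom ^ 2 := by
        calc (n+1)^2 * (n+1).centralBinom ^ 2 = ((n+1) * (n+1).centralBinom)^2 := by ring
          _ = (2 * (2*n+1) * n.centralBinom)^2 := by rw [key]
          _ = 4 * (2*n+1)^2 * n.centralBinom ^ 2 := by ring
      have h1 : 16 ^ (n+1) * (n+1)^2 ≤ 4 * (n+1) * (n+1).centralBinom ^ 2 * (n+1)^2 := by
        calc 16 ^ (n+1) * (n+1)^2 = 16 * (n+1)^2 * 16 ^ n := by ring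
          _ ≤ 16 * (n+1)^2 * (4 * n * n.centralBinom ^ 2) := Nat.mul_le_mul_left _ IH
          _ ≤ 4 * (n+1) * (4 * (2*n+1)^2 * n.centralBinom ^ 2) := by nlinarith
          _ = 4 * (n+1) * ((n+1)^2 * (n+1).centralBinom ^ 2) := by rw [expand]
          _ = 4 * (n+1) * (n+1).centralBinom ^ 2 * (n+1)^2 := by ring
      exact Nat.le_of_mul_le_mul_right h1 (by positivity)

section P2
variable {d : ℕ}

/-- Sum of a function over the `2d` lattice neighbours of `x`. -/
def nbrSum {M : Type*} [AddCommMonoid M] (f : (Fin d → ℤ) → M) (x : Fin d → ℤ) : M :=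
  ∑ i : Fin d, (f (Function.update x i (x i + 1)) + f (Function.update x i (x i - 1)))

/-- Number of nearest-neighbour walks of length `n` from `x` to `0` in `ℤ^d`. -/
def walkCount (d : ℕ) : ℕ → (Fin d → ℤ) → ℕ
  | 0, x => if x = 0 then 1 else 0
  | n + 1, x => nbrSum (walkCount d n) x

lemma walkCount_le (n : ℕ) (x : Fin d → ℤ) : walkCount d n x ≤ (2 * d) ^ n := by
  induction n generalizing x with
  | zero => by_cases h : x = 0 <;> simp [walkCount, h]
  | succ n ih =>
    rw [walkCount, nbrSum]
    calc ∑ i : Fin d, (walkCount d n (Function.update x i (x i + 1)) +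
          walkCount d n (Function.update x i (x i - 1)))
        ≤ ∑ _i : Fin d, ((2*d)^n + (2*d)^n) :=
          Finset.sum_le_sum fun i _ => add_le_add (ih _) (ih _)
      _ = (2 * d) ^ (n + 1) := by
          rw [Finset.sum_const, Finset.card_univ, Fintype.card_fin]
          ring

lemma natAbs_sum_update (x : Fin d → ℤ) (i : Fin d) (v : ℤ) :
    ∑ j : Fin d, ((Function.update x i v) j).natAbs
      = v.natAbs + ∑ j ∈ Finset.univ \ {i}, (x j).natAbs := by
  rw [← Finset.sum_update_of_mem (Finset.mem_univ i) (fun j => (x j).natAbs) v.natAbs]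
  apply Finset.sum_congr rfl
  intro j _
  by_cases h : j = i
  · subst h; simp
  · rw [Function.update_of_ne h, Function.update_of_ne h]

lemma walkCount_support (n : ℕ) (x : Fin d → ℤ) (h : walkCount d n x ≠ 0) :
    ∑ j : Fin d, (x j).natAbs ≤ n := by
  induction n generalizing x with
  | zero =>
    by_cases hx : x = 0
    · subst hx; simp
    · simp [walkCount, hx] at h
  | succ n ih =>
    rw [walkCount, nbrSum] at h
    obtain ⟨i, -, hi⟩ := Finset.exists_ne_zero_of_sum_ne_zero h
    have hx : ∑ j : Fin d, (x j).natAbs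
        = ∑ j ∈ Finset.univ \ {i}, (x j).natAbs + (x i).natAbs :=
      Finset.sum_eq_sum_sdiff_singleton_add (Finset.mem_univ i) _
    rcases Nat.eq_zero_or_pos (walkCount d n (Function.update x i (x i + 1))) with h1 | h1
    · have h2 : walkCount d n (Function.update x i (x i - 1)) ≠ 0 := by omega
      have := ih _ h2
      rw [natAbs_sum_update] at this
      have : (x i - 1).natAbs + 1 ≥ (x i).natAbs := by omega
      omega
    · have := ih _ (Nat.pos_iff_ne_zero.mp h1)
      rw [natAbs_sum_update] at this
      have : (x i + 1).natAbs + 1 ≥ (x i).natAbs := by omega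
      omega

lemma walkCount_one (n : ℕ) (x : Fin 1 → ℤ) : walkCount 1 n x = oneD n (x 0) := by
  induction n generalizing x with
  | zero =>
    rw [walkCount, oneD]
    congr 1
    simp only [eq_iff_iff]
    constructor
    · intro h; rw [h]; rfl
    · intro h; funext j; rw [Fin.eq_zero j]; exact h
  | succ n ih =>
    rw [walkCount, oneD, nbrSum, Fin.sum_univ_one, ih, ih]
    simp [Function.update_self]
    ring

lemma walkCount_two (n : ℕ) (x : Fin 2 → ℤ) :
    walkCount 2 n x = oneD n (x 0 + x 1) * oneD n (x 0 - x 1) := by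
  induction n generalizing x with
  | zero =>
    rw [walkCount, oneD, oneD]
    by_cases h : x = 0
    · rw [if_pos h, h]; norm_num
    · rw [if_neg h]
      have : ¬(x 0 + x 1 = 0 ∧ x 0 - x 1 = 0) := by
        intro ⟨h1, h2⟩
        apply h
        funext j
        fin_cases j <;> simp <;> omega
      rcases not_and_or.mp this with h1 | h1
      · rw [if_neg h1, zero_mul]
      · rw [if_neg h1, mul_zero]
  | succ n ih =>
    rw [walkCount, nbrSum, Fin.sum_univ_two, ih, ih, ih, ih]
    have e0 : (0 : Fin 2) ≠ 1 := by decide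
    have e1 : (1 : Fin 2) ≠ 0 := by decide
    simp only [Function.update_self, Function.update_of_ne e1, Function.update_of_ne e0]
    rw [oneD, oneD]
    ring_nf

lemma centralBinom_le_four_pow (n : ℕ) : n.centralBinom ≤ 4 ^ n := by
  have h : (2 * n).choose n ≤ ∑ m ∈ Finset.range (2 * n + 1), (2 * n).choose m :=
    Finset.single_le_sum (fun i _ => Nat.zero_le _)
      (Finset.mem_range.mpr (show n < 2 * n + 1 by omega))
  rw [Nat.sum_range_choose] at h
  calc n.centralBinom = (2 * n).choose n := rfl
    _ ≤ 2 ^ (2 * n) := h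
    _ = 4 ^ n := by rw [pow_mul]; norm_num

section Green
variable {d : ℕ} {s : ℝ}

noncomputable def green (d : ℕ) (s : ℝ) (x : Fin d → ℤ) : ℝ :=
  ∑' n : ℕ, (walkCount d n x : ℝ) * s ^ (n + 1)

lemma walk_term_nonneg (hs : 0 ≤ s) (x : Fin d → ℤ) (n : ℕ) :
    0 ≤ (walkCount d n x : ℝ) * s ^ (n + 1) := by positivity

lemma walk_term_le (hs : 0 ≤ s) (x : Fin d → ℤ) (n : ℕ) :
    (walkCount d n x : ℝ) * s ^ (n + 1) ≤ (2 * d * s) ^ n * s := by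
  have h1 : (walkCount d n x : ℝ) ≤ (2 * d : ℝ) ^ n := by
    exact_mod_cast Nat.cast_le.mpr (walkCount_le n x)
  calc (walkCount d n x : ℝ) * s ^ (n + 1) ≤ (2 * d : ℝ) ^ n * s ^ (n + 1) := by
        apply mul_le_mul_of_nonneg_right h1 (by positivity)
    _ = (2 * d * s) ^ n * s := by rw [mul_pow, pow_succ]; ring

lemma summable_geom_s (hs : 0 ≤ s) (hs2 : 2 * (d : ℝ) * s < 1) :
    Summable (fun n : ℕ => (2 * (d : ℝ) * s) ^ n * s) :=
  (summable_geometric_of_lt_one (by positivity) hs2).mul_right s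

lemma summable_walk (hs : 0 ≤ s) (hs2 : 2 * (d : ℝ) * s < 1) (x : Fin d → ℤ) :
    Summable (fun n : ℕ => (walkCount d n x : ℝ) * s ^ (n + 1)) :=
  Summable.of_nonneg_of_le (walk_term_nonneg hs x) (walk_term_le hs x)
    (summable_geom_s hs hs2)

lemma green_nonneg (hs : 0 ≤ s) (x : Fin d → ℤ) : 0 ≤ green d s x :=
  tsum_nonneg (walk_term_nonneg hs x)

lemma green_zero_eval (x : Fin d → ℤ) : green d 0 x = 0 := by
  rw [green]
  convert tsum_zero with n
  simp

lemma green_le (hs : 0 ≤ s) (hs2 : 2 * (d : ℝ) * s < 1) (x : Fin d → ℤ) :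
    green d s x ≤ (2 * d * s) ^ (∑ j, (x j).natAbs) * (s / (1 - 2 * d * s)) := by
  set N := ∑ j, (x j).natAbs with hN
  set q : ℝ := 2 * d * s with hq
  have hq0 : 0 ≤ q := by positivity
  have hinj : Function.Injective (fun k : ℕ => k + N) := add_left_injective N
  have hvanish : Function.support (fun n : ℕ => (walkCount d n x : ℝ) * s ^ (n + 1))
      ⊆ Set.range (fun k : ℕ => k + N) := by
    intro n hn
    have h0 : walkCount d n x ≠ 0 := by
      intro h
      apply hn
      simp [h]
    have hnN : N ≤ n := walkCount_support n x h0
    exact ⟨n - N, by simpa using Nat.sub_add_cancel hnN⟩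
  rw [green, ← Function.Injective.tsum_eq hinj hvanish]
  have hle : ∀ k : ℕ, (walkCount d (k + N) x : ℝ) * s ^ (k + N + 1) ≤ q ^ N * s * q ^ k := by
    intro k
    calc (walkCount d (k + N) x : ℝ) * s ^ (k + N + 1) ≤ q ^ (k + N) * s :=
          walk_term_le hs x (k + N)
      _ = q ^ N * s * q ^ k := by rw [pow_add]; ring
  calc (∑' k : ℕ, (walkCount d (k + N) x : ℝ) * s ^ (k + N + 1))
      ≤ ∑' k : ℕ, q ^ N * s * q ^ k := by
        apply Summable.tsum_le_tsum hle
        · exact ((summable_walk hs hs2 x).comp_injective hinj)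
        · exact (summable_geometric_of_lt_one hq0 hs2).mul_left _
    _ = q ^ N * s * (1 - q)⁻¹ := by
        rw [tsum_mul_left, tsum_geometric_of_lt_one hq0 hs2]
    _ = q ^ N * (s / (1 - q)) := by ring

lemma green_recursion (hs : 0 ≤ s) (hs2 : 2 * (d : ℝ) * s < 1) (x : Fin d → ℤ) :
    s * nbrSum (green d s) x = green d s x - (if x = 0 then s else 0) := by
  have hsum : ∀ (z : Fin d → ℤ), Summable (fun n : ℕ => (walkCount d n z : ℝ) * s ^ (n + 1)) :=
    summable_walk hs hs2
  have step1 : nbrSum (green d s) x = ∑' n : ℕ, (walkCount d (n + 1) x : ℝ) * s ^ (n + 1) := by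
    rw [nbrSum]
    have h1 : ∀ i : Fin d,
        green d s (Function.update x i (x i + 1)) + green d s (Function.update x i (x i - 1))
          = ∑' n : ℕ, ((walkCount d n (Function.update x i (x i + 1)) : ℝ) * s ^ (n + 1) +
              (walkCount d n (Function.update x i (x i - 1)) : ℝ) * s ^ (n + 1)) := by
      intro i
      rw [green, green, Summable.tsum_add (hsum _) (hsum _)]
    rw [Finset.sum_congr rfl (fun i _ => h1 i),
      ← Summable.tsum_finsetSum (fun i (_ : i ∈ Finset.univ) => ((hsum _).add (hsum _)))]
    apply tsum_congr
    intro n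
    rw [walkCount, nbrSum]
    push_cast
    rw [Finset.sum_mul]
    apply Finset.sum_congr rfl
    intro i _
    ring
  have step2 : s * nbrSum (green d s) x
      = ∑' n : ℕ, (walkCount d (n + 1) x : ℝ) * s ^ (n + 1 + 1) := by
    rw [step1, ← tsum_mul_left]
    apply tsum_congr
    intro n
    rw [pow_succ]
    ring
  have step3 := Summable.tsum_eq_zero_add (hsum x)
  rw [green, step3]
  rw [step2]
  have h0 : (walkCount d 0 x : ℝ) * s ^ (0 + 1) = if x = 0 then s else 0 := by
    rw [walkCount]
    by_cases h : x = 0 <;> simp [h]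
  rw [h0]
  ring

end Green

section Mono
variable {d : ℕ}

lemma walkCount_zero_zero : walkCount d 0 (0 : Fin d → ℤ) = 1 := by
  rw [walkCount, if_pos rfl]

lemma green_strictMono {s t : ℝ} (hs : 0 ≤ s) (hst : s < t) (ht2 : 2 * (d : ℝ) * t < 1) :
    green d s 0 < green d t 0 := by
  have ht : 0 ≤ t := hs.trans hst.le
  have hs2 : 2 * (d : ℝ) * s < 1 := by nlinarith [Nat.cast_nonneg (α := ℝ) d]
  apply Summable.tsum_lt_tsum (i := 0)
  · intro n
    apply mul_le_mul_of_nonneg_left (pow_le_pow_left₀ hs hst.le _) (Nat.cast_nonneg _)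
  · simp only [walkCount_zero_zero, Nat.cast_one, one_mul, pow_one]
    exact pow_lt_pow_left₀ hst hs (by omega)
  · exact summable_walk hs hs2 0
  · exact summable_walk ht ht2 0

lemma green_continuousOn (r : ℝ) (hr : 0 ≤ r) (hr2 : 2 * (d : ℝ) * r < 1) :
    ContinuousOn (fun s : ℝ => green d s 0) (Set.Icc 0 r) := by
  have hb : ∀ (n : ℕ), ∀ u ∈ Set.Icc (0:ℝ) r,
      ‖(walkCount d n (0 : Fin d → ℤ) : ℝ) * u ^ (n + 1)‖ ≤ (2 * (d:ℝ) * r) ^ n * r := by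
    intro n u hu
    rw [Real.norm_eq_abs, abs_of_nonneg (walk_term_nonneg hu.1 0 n)]
    calc (walkCount d n (0 : Fin d → ℤ) : ℝ) * u ^ (n + 1)
        ≤ (walkCount d n (0 : Fin d → ℤ) : ℝ) * r ^ (n + 1) :=
          mul_le_mul_of_nonneg_left (pow_le_pow_left₀ hu.1 hu.2 _) (Nat.cast_nonneg _)
      _ ≤ (2 * (d:ℝ) * r) ^ n * r := walk_term_le hr 0 n
  have := tendstoUniformlyOn_tsum (summable_geom_s hr hr2) hb
  exact this.continuousOn (Filter.Eventually.of_forall (f := Filter.atTop) fun t =>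
    (Continuous.continuousOn (by continuity))).frequently

end Mono

section Blowup
variable {d : ℕ}

lemma term_lb_one (m : ℕ) :
    1 / (16 * ((m : ℝ) + 1)) ≤ (walkCount 1 (2 * m + 2) (0 : Fin 1 → ℤ) : ℝ)
      * (1 / (2 * ((1:ℕ) : ℝ))) ^ (2 * m + 2 + 1) := by
  have hwc : walkCount 1 (2 * m + 2) (0 : Fin 1 → ℤ) = (m + 1).centralBinom := by
    rw [walkCount_one]
    have h0 : (0 : Fin 1 → ℤ) 0 = 0 := rfl
    have h2 : 2 * m + 2 = 2 * (m + 1) := by ring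
    rw [h0, h2, oneD_two_mul_zero]
  have h1 : 16 ^ (m + 1) ≤ 4 * (m + 1) * (m + 1).centralBinom ^ 2 :=
    sixteen_pow_le (m + 1) (by omega)
  have h2 : (m + 1).centralBinom ≤ 4 ^ (m + 1) := centralBinom_le_four_pow (m + 1)
  have h3 : 4 ^ (m + 1) ≤ 4 * (m + 1) * (m + 1).centralBinom := by
    have key : 4 ^ (m+1) * 4 ^ (m+1) ≤ (4 * (m + 1) * (m + 1).centralBinom) * 4 ^ (m+1) := by
      calc 4 ^ (m+1) * 4 ^ (m+1) = 16 ^ (m+1) := by rw [← mul_pow]; norm_num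
        _ ≤ 4 * (m + 1) * (m + 1).centralBinom ^ 2 := h1
        _ = (4 * (m + 1) * (m + 1).centralBinom) * (m+1).centralBinom := by ring
        _ ≤ (4 * (m + 1) * (m + 1).centralBinom) * 4 ^ (m+1) :=
            Nat.mul_le_mul_left _ h2
    exact Nat.le_of_mul_le_mul_right key (by positivity)
  have h4 : 2 ^ (2 * m + 2 + 1) ≤ 16 * (m + 1) * (m + 1).centralBinom := by
    have e1 : 2 ^ (2 * m + 2 + 1) = 2 * 4 ^ (m + 1) := by
      have e2 : 2 * m + 2 + 1 = 2 * (m + 1) + 1 := by ring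
      rw [e2, pow_succ, pow_mul]
      norm_num
      ring
    rw [e1]
    nlinarith [h3]
  have h4' : (2:ℝ) ^ (2 * m + 2 + 1) ≤ 16 * ((m:ℝ) + 1) * ((m + 1).centralBinom : ℝ) := by
    exact_mod_cast h4
  rw [hwc]
  have hc : (1 / (2 * ((1:ℕ) : ℝ))) = ((2:ℝ))⁻¹ := by norm_num
  rw [hc, div_le_iff₀ (by positivity), inv_pow]
  have hp : (0:ℝ) < (2:ℝ) ^ (2 * m + 2 + 1) := by positivity
  calc (1:ℝ) = (2:ℝ) ^ (2*m+2+1) * ((2:ℝ) ^ (2*m+2+1))⁻¹ := (mul_inv_cancel₀ hp.ne').symm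
    _ ≤ (16 * ((m:ℝ) + 1) * ((m + 1).centralBinom : ℝ)) * ((2:ℝ) ^ (2*m+2+1))⁻¹ :=
        mul_le_mul_of_nonneg_right h4' (by positivity)
    _ = ((m + 1).centralBinom : ℝ) * ((2:ℝ) ^ (2*m+2+1))⁻¹ * (16 * ((m:ℝ) + 1)) := by ring

lemma term_lb_two (m : ℕ) :
    1 / (16 * ((m : ℝ) + 1)) ≤ (walkCount 2 (2 * m + 2) (0 : Fin 2 → ℤ) : ℝ)
      * (1 / (2 * ((2:ℕ) : ℝ))) ^ (2 * m + 2 + 1) := by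
  have hwc : walkCount 2 (2 * m + 2) (0 : Fin 2 → ℤ) = (m + 1).centralBinom ^ 2 := by
    rw [walkCount_two]
    have h0 : (0 : Fin 2 → ℤ) 0 + (0 : Fin 2 → ℤ) 1 = 0 := rfl
    have h1 : (0 : Fin 2 → ℤ) 0 - (0 : Fin 2 → ℤ) 1 = 0 := rfl
    have h2 : 2 * m + 2 = 2 * (m + 1) := by ring
    rw [h0, h1, h2, oneD_two_mul_zero, sq]
  have h1 : 16 ^ (m + 1) ≤ 4 * (m + 1) * (m + 1).centralBinom ^ 2 :=
    sixteen_pow_le (m + 1) (by omega)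
  have h4 : 4 ^ (2 * m + 2 + 1) ≤ 16 * (m + 1) * (m + 1).centralBinom ^ 2 := by
    have e1 : 4 ^ (2 * m + 2 + 1) = 4 * 16 ^ (m + 1) := by
      have e2 : 2 * m + 2 + 1 = 2 * (m + 1) + 1 := by ring
      rw [e2, pow_succ, pow_mul]
      norm_num
      ring
    rw [e1]
    nlinarith [h1]
  have h4' : (4:ℝ) ^ (2 * m + 2 + 1) ≤ 16 * ((m:ℝ) + 1) * (((m + 1).centralBinom : ℝ)) ^ 2 := by
    exact_mod_cast h4
  rw [hwc]
  have hc : (1 / (2 * ((2:ℕ) : ℝ))) = ((4:ℝ))⁻¹ := by norm_num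
  rw [hc, div_le_iff₀ (by positivity), inv_pow]
  have hp : (0:ℝ) < (4:ℝ) ^ (2 * m + 2 + 1) := by positivity
  push_cast
  calc (1:ℝ) = (4:ℝ) ^ (2*m+2+1) * ((4:ℝ) ^ (2*m+2+1))⁻¹ := (mul_inv_cancel₀ hp.ne').symm
    _ ≤ (16 * ((m:ℝ) + 1) * ((m + 1).centralBinom : ℝ) ^ 2) * ((4:ℝ) ^ (2*m+2+1))⁻¹ :=
        mul_le_mul_of_nonneg_right h4' (by positivity)
    _ = ((m + 1).centralBinom : ℝ) ^ 2 * ((4:ℝ) ^ (2*m+2+1))⁻¹ * (16 * ((m:ℝ) + 1)) := by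
        push_cast
        ring

lemma term_lb (hd : d = 1 ∨ d = 2) (m : ℕ) :
    1 / (16 * ((m : ℝ) + 1)) ≤ (walkCount d (2 * m + 2) (0 : Fin d → ℤ) : ℝ)
      * (1 / (2 * (d : ℝ))) ^ (2 * m + 2 + 1) := by
  rcases hd with rfl | rfl
  · exact term_lb_one m
  · exact term_lb_two m

lemma green_blowup (hd : d = 1 ∨ d = 2) (C : ℝ) :
    ∃ s : ℝ, 0 < s ∧ 2 * (d : ℝ) * s < 1 ∧ C < green d s 0 := by
  have hd1 : (1:ℝ) ≤ (d:ℝ) := by rcases hd with rfl | rfl <;> norm_num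
  set r : ℝ := 1 / (2 * (d : ℝ)) with hr
  have hrpos : 0 < r := by positivity
  have hrd : 2 * (d : ℝ) * r = 1 := by
    rw [hr]; field_simp
  -- choose M with large harmonic sum
  obtain ⟨M, hM⟩ := (Real.tendsto_sum_range_one_div_nat_succ_atTop.eventually_ge_atTop
    (16 * (C + 1))).exists
  set P : ℝ → ℝ := fun s => ∑ n ∈ Finset.range (2 * M + 2),
    (walkCount d n (0 : Fin d → ℤ) : ℝ) * s ^ (n + 1) with hP
  have hPcont : Continuous P := by
    apply continuous_finset_sum
    intro n _
    continuity
  have hPr : C + 1 ≤ P r := by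
    have hsub : ∑ i ∈ Finset.range M,
        (walkCount d (2 * i + 2) (0 : Fin d → ℤ) : ℝ) * r ^ (2 * i + 2 + 1) ≤ P r := by
      show _ ≤ ∑ n ∈ Finset.range (2 * M + 2), (walkCount d n (0 : Fin d → ℤ) : ℝ) * r ^ (n + 1)
      rw [← Finset.sum_image (g := fun i => 2 * i + 2)
        (f := fun n => (walkCount d n (0 : Fin d → ℤ) : ℝ) * r ^ (n + 1))
        (fun a _ b _ h => by dsimp only at h; omega)]
      apply Finset.sum_le_sum_of_subset_of_nonneg
      · intro n hn
        simp only [Finset.mem_image, Finset.mem_range] at hn ⊢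
        obtain ⟨i, hi, rfl⟩ := hn
        omega
      · intro n _ _
        exact walk_term_nonneg hrpos.le _ n
    have hlb : ∑ i ∈ Finset.range M, 1 / (16 * ((i : ℝ) + 1))
        ≤ ∑ i ∈ Finset.range M,
          (walkCount d (2 * i + 2) (0 : Fin d → ℤ) : ℝ) * r ^ (2 * i + 2 + 1) :=
      Finset.sum_le_sum fun i _ => term_lb hd i
    have hhar : 16 * (C + 1) ≤ ∑ i ∈ Finset.range M, 1 / ((i : ℝ) + 1) := hM
    have hfac : ∑ i ∈ Finset.range M, 1 / (16 * ((i : ℝ) + 1))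
        = (1 / 16) * ∑ i ∈ Finset.range M, 1 / ((i : ℝ) + 1) := by
      rw [Finset.mul_sum]
      exact Finset.sum_congr rfl fun i _ => (one_div_mul_one_div 16 ((i:ℝ)+1)).symm
    calc C + 1 = (1/16) * (16 * (C + 1)) := by ring
      _ ≤ (1/16) * ∑ i ∈ Finset.range M, 1 / ((i : ℝ) + 1) := by linarith [hhar]
      _ = ∑ i ∈ Finset.range M, 1 / (16 * ((i : ℝ) + 1)) := hfac.symm
      _ ≤ ∑ i ∈ Finset.range M,
          (walkCount d (2 * i + 2) (0 : Fin d → ℤ) : ℝ) * r ^ (2 * i + 2 + 1) := hlb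
      _ ≤ P r := hsub
  -- now pick s slightly below r
  have hev1 : ∀ᶠ s in nhdsWithin r (Set.Iio r), C < P s := by
    apply Filter.Eventually.filter_mono nhdsWithin_le_nhds
    exact (hPcont.tendsto r).eventually (eventually_gt_nhds (by linarith))
  have hev2 : ∀ᶠ s in nhdsWithin r (Set.Iio r), 0 < s := by
    apply Filter.Eventually.filter_mono nhdsWithin_le_nhds
    exact (continuous_id.tendsto r).eventually (eventually_gt_nhds hrpos)
  have hev3 : ∀ᶠ s in nhdsWithin r (Set.Iio r), s < r := eventually_mem_nhdsWithin
  obtain ⟨s, hs1, hs2, hs3⟩ := (hev1.and (hev2.and hev3)).exists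
  have hs2d : 2 * (d : ℝ) * s < 1 := by
    calc 2 * (d:ℝ) * s < 2 * (d:ℝ) * r := mul_lt_mul_of_pos_left hs3 (by positivity)
      _ = 1 := hrd
  refine ⟨s, hs2, hs2d, ?_⟩
  calc C < P s := hs1
    _ ≤ green d s 0 := by
      rw [hP, green]
      exact Summable.sum_le_tsum _ (fun n _ => walk_term_nonneg hs2.le _ n)
        (summable_walk hs2.le hs2d 0)

lemma exists_sstar (hd : d = 1 ∨ d = 2) (α : ℝ) (hα : 0 < α) :
    ∃ s : ℝ, 0 < s ∧ 2 * (d : ℝ) * s < 1 ∧ α * green d s 0 = 1 := by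
  obtain ⟨t, ht0, ht2, htC⟩ := green_blowup hd (1 / α)
  have hcont : ContinuousOn (fun s : ℝ => green d s 0) (Set.Icc 0 t) :=
    green_continuousOn t ht0.le ht2
  have hmem : (1 / α) ∈ Set.Icc (green d 0 0) (green d t 0) := by
    constructor
    · rw [green_zero_eval]
      positivity
    · exact htC.le
  obtain ⟨s, hsmem, hs⟩ := intermediate_value_Icc ht0.le hcont hmem
  have hs' : green d s 0 = 1 / α := hs
  have hs0 : 0 < s := by
    rcases eq_or_lt_of_le hsmem.1 with h | h
    · exfalso
      have hz : green d s 0 = 0 := by rw [← h]; exact green_zero_eval 0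
      rw [hz] at hs'
      have hpos : (0:ℝ) < 1 / α := by positivity
      linarith [hs'.symm.le]
    · exact h
  refine ⟨s, hs0, ?_, ?_⟩
  · calc 2 * (d:ℝ) * s ≤ 2 * (d:ℝ) * t :=
        mul_le_mul_of_nonneg_left hsmem.2 (by positivity)
      _ < 1 := ht2
  · rw [hs']
    field_simp

end Blowup

/-- The lattice Schrödinger operator `H = -Δ - α δ_y` on functions `ℤ^d → ℂ`:
`(Hψ)(x) = Σ_{‖x-x'‖₁=1} (ψ(x) - ψ(x')) - α (ψ(y) if x = y else 0)`. -/
noncomputable def deltaHamiltonian (d : ℕ) (y : Fin d → ℤ) (α : ℝ)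
    (ψ : (Fin d → ℤ) → ℂ) (x : Fin d → ℤ) : ℂ :=
  (∑ i : Fin d, ((ψ x - ψ (Function.update x i (x i + 1))) +
      (ψ x - ψ (Function.update x i (x i - 1))))) -
    (α : ℂ) * (if x = y then ψ y else 0)

section ComplexSide
variable {d : ℕ} {s : ℝ}

lemma deltaH_eq (y : Fin d → ℤ) (α : ℝ) (ψ : (Fin d → ℤ) → ℂ) (x : Fin d → ℤ) :
    deltaHamiltonian d y α ψ x
      = 2 * (d : ℂ) * ψ x - nbrSum ψ x - (α : ℂ) * (if x = y then ψ y else 0) := by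
  rw [deltaHamiltonian, nbrSum]
  have h : ∀ i ∈ Finset.univ, (ψ x - ψ (Function.update x i (x i + 1))) +
      (ψ x - ψ (Function.update x i (x i - 1)))
      = 2 * ψ x - (ψ (Function.update x i (x i + 1)) + ψ (Function.update x i (x i - 1))) :=
    fun i _ => by ring
  rw [Finset.sum_congr rfl h, Finset.sum_sub_distrib, Finset.sum_const, Finset.card_univ,
    Fintype.card_fin, nsmul_eq_mul]
  ring

lemma nbrSum_translate {M : Type*} [AddCommMonoid M] (f : (Fin d → ℤ) → M)
    (y x : Fin d → ℤ) :
    nbrSum (fun z => f (z - y)) x = nbrSum f (x - y) := by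
  rw [nbrSum, nbrSum]
  apply Finset.sum_congr rfl
  intro i _
  have h1 : Function.update x i (x i + 1) - y = Function.update (x - y) i ((x - y) i + 1) := by
    funext j
    by_cases h : j = i
    · subst h
      simp only [Pi.sub_apply, Function.update_self]
      ring
    · simp only [Pi.sub_apply, Function.update_of_ne h]
  have h2 : Function.update x i (x i - 1) - y = Function.update (x - y) i ((x - y) i - 1) := by
    funext j
    by_cases h : j = i
    · subst h
      simp only [Pi.sub_apply, Function.update_self]
      ring
    · simp only [Pi.sub_apply, Function.update_of_ne h]
  rw [h1, h2]

lemma nbrSum_ofReal (f : (Fin d → ℤ) → ℝ) (x : Fin d → ℤ) :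
    nbrSum (fun z => ((f z : ℝ) : ℂ)) x = ((nbrSum f x : ℝ) : ℂ) := by
  rw [nbrSum, nbrSum]
  push_cast
  rfl

/-- The complex Green's function centered at `y`. -/
noncomputable def greenC (d : ℕ) (y : Fin d → ℤ) (s : ℝ) (x : Fin d → ℤ) : ℂ :=
  ((green d s (x - y) : ℝ) : ℂ)

lemma greenC_recursion (y : Fin d → ℤ) (hs : 0 < s) (hs2 : 2 * (d : ℝ) * s < 1)
    (x : Fin d → ℤ) :
    (s : ℂ) * nbrSum (greenC d y s) x
      = greenC d y s x - (if x = y then (s : ℂ) else 0) := by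
  have h := green_recursion hs.le hs2 (x - y)
  have ht : nbrSum (greenC d y s) x = ((nbrSum (green d s) (x - y) : ℝ) : ℂ) := by
    rw [← nbrSum_ofReal]
    exact nbrSum_translate (fun z => ((green d s z : ℝ) : ℂ)) y x
  rw [ht]
  rw [greenC]
  have hsub : (x - y = 0) ↔ (x = y) := sub_eq_zero
  calc (s : ℂ) * ((nbrSum (green d s) (x - y) : ℝ) : ℂ)
      = (((s * nbrSum (green d s) (x - y) : ℝ)) : ℂ) := by push_cast; ring
    _ = ((green d s (x - y) - (if x - y = 0 then s else 0) : ℝ) : ℂ) := by rw [h]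
    _ = ((green d s (x - y) : ℝ) : ℂ) - (if x = y then (s:ℂ) else 0) := by
        rw [Complex.ofReal_sub]
        congr 1
        rw [apply_ite Complex.ofReal, if_congr hsub rfl rfl]
        simp

lemma nbrSum_sub (f g : (Fin d → ℤ) → ℂ) (x : Fin d → ℤ) :
    nbrSum (fun z => f z - g z) x = nbrSum f x - nbrSum g x := by
  rw [nbrSum, nbrSum, nbrSum, ← Finset.sum_sub_distrib]
  apply Finset.sum_congr rfl
  intro i _
  ring

lemma nbrSum_const_mul (c : ℂ) (f : (Fin d → ℤ) → ℂ) (x : Fin d → ℤ) :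
    nbrSum (fun z => c * f z) x = c * nbrSum f x := by
  rw [nbrSum, nbrSum, Finset.mul_sum]
  apply Finset.sum_congr rfl
  intro i _
  ring

end ComplexSide

section L2
variable {d : ℕ} {s : ℝ}

lemma summable_rho (hd : d = 1 ∨ d = 2) {ρ : ℝ} (h0 : 0 ≤ ρ) (h1 : ρ < 1) :
    Summable (fun z : Fin d → ℤ => ρ ^ (∑ j, (z j).natAbs)) := by
  have hint : Summable (fun n : ℤ => ρ ^ n.natAbs) := by
    apply Summable.of_nat_of_neg
    · have := summable_geometric_of_lt_one h0 h1
      exact this.congr fun n => by simp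
    · have := summable_geometric_of_lt_one h0 h1
      exact this.congr fun n => by simp
  rcases hd with rfl | rfl
  · have h := ((Equiv.funUnique (Fin 1) ℤ).summable_iff
      (f := fun n : ℤ => ρ ^ n.natAbs)).mpr hint
    apply h.congr
    intro z
    simp only [Function.comp_apply, Fin.sum_univ_one, Equiv.funUnique_apply]
    rfl
  · have hg : Summable (fun p : ℤ × ℤ => ρ ^ p.1.natAbs * ρ ^ p.2.natAbs) :=
      Summable.mul_of_nonneg (f := fun n : ℤ => ρ ^ n.natAbs) (g := fun n : ℤ => ρ ^ n.natAbs)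
        hint hint (fun n => by positivity) (fun n => by positivity)
    have h := ((piFinTwoEquiv (fun _ => ℤ)).summable_iff
      (f := fun p : ℤ × ℤ => ρ ^ p.1.natAbs * ρ ^ p.2.natAbs)).mpr hg
    apply h.congr
    intro z
    simp only [Function.comp_apply, Fin.sum_univ_two, piFinTwoEquiv_apply]
    rw [pow_add]

lemma greenC_memℓ2 (hd : d = 1 ∨ d = 2) (y : Fin d → ℤ) (hs : 0 < s)
    (hs2 : 2 * (d : ℝ) * s < 1) : Memℓp (greenC d y s) 2 := by
  apply memℓp_gen
  set q : ℝ := 2 * (d : ℝ) * s with hq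
  have hq0 : 0 ≤ q := by positivity
  set K : ℝ := s / (1 - q) with hK
  have hK0 : 0 ≤ K := by
    apply div_nonneg hs.le
    linarith
  have hρ0 : 0 ≤ q ^ 2 := by positivity
  have hρ1 : q ^ 2 < 1 := by nlinarith
  -- majorant summable
  have hmaj : Summable (fun x : Fin d → ℤ => K ^ 2 * (q ^ 2) ^ (∑ j, ((x - y) j).natAbs)) := by
    have hbase := (summable_rho hd hρ0 hρ1).mul_left (K ^ 2)
    have h := ((Equiv.subRight y (G := Fin d → ℤ)).summable_iff
      (f := fun z : Fin d → ℤ => K ^ 2 * (q ^ 2) ^ (∑ j, (z j).natAbs))).mpr hbase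
    apply h.congr
    intro z
    simp only [Function.comp_apply, Equiv.subRight_apply]
  apply Summable.of_nonneg_of_le (fun x => by positivity) _ hmaj
  intro x
  have hnorm : ‖greenC d y s x‖ = green d s (x - y) := by
    rw [greenC, Complex.norm_real, Real.norm_eq_abs, abs_of_nonneg (green_nonneg hs.le _)]
  have htoReal : ((2 : ENNReal)).toReal = (2 : ℝ) := by norm_num
  rw [hnorm, htoReal]
  have hgb : green d s (x - y) ≤ q ^ (∑ j, ((x - y) j).natAbs) * K := green_le hs.le hs2 _
  have hgn : 0 ≤ green d s (x - y) := green_nonneg hs.le _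
  have h2 : green d s (x - y) ^ (2:ℝ) = green d s (x - y) ^ (2:ℕ) := by
    rw [← Real.rpow_natCast]
    norm_num
  rw [h2]
  calc green d s (x - y) ^ (2:ℕ) ≤ (q ^ (∑ j, ((x - y) j).natAbs) * K) ^ (2:ℕ) := by
        apply pow_le_pow_left₀ hgn hgb
    _ = K ^ 2 * (q ^ 2) ^ (∑ j, ((x - y) j).natAbs) := by
        rw [mul_pow, ← pow_mul, ← pow_mul']
        ring
  done

lemma kernel_trivial (mu : ℝ) (hmu : mu < 0) (ψ : (Fin d → ℤ) → ℂ) (hψ : Memℓp ψ 2)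
    (heq : ∀ x, ((2 * (d : ℝ) - mu : ℝ) : ℂ) * ψ x = nbrSum ψ x) : ψ = 0 := by
  by_contra hne
  obtain ⟨x₁, hx₁⟩ : ∃ x, ψ x ≠ 0 := by
    by_contra h
    push_neg at h
    exact hne (funext h)
  have hsum : Summable fun x => ‖ψ x‖ ^ (2 : ENNReal).toReal := hψ.summable (by norm_num)
  have hsum2 : Summable fun x => ‖ψ x‖ ^ (2:ℕ) := by
    apply hsum.congr
    intro x
    have : ((2 : ENNReal)).toReal = (2 : ℝ) := by norm_num
    rw [this, ← Real.rpow_natCast]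
    norm_num
  set ε := ‖ψ x₁‖ ^ (2:ℕ) with hε
  have hεpos : 0 < ε := by
    have : 0 < ‖ψ x₁‖ := norm_pos_iff.mpr hx₁
    positivity
  have hfin : {x | ε ≤ ‖ψ x‖ ^ (2:ℕ)}.Finite := by
    have hev : ∀ᶠ x in Filter.cofinite, ‖ψ x‖ ^ (2:ℕ) < ε :=
      hsum2.tendsto_cofinite_zero.eventually_lt_const hεpos
    rw [Filter.eventually_cofinite] at hev
    convert hev using 2 with x
    simp [not_lt]
  have hx₁mem : x₁ ∈ hfin.toFinset := by
    rw [Set.Finite.mem_toFinset]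
    exact le_refl ε
  obtain ⟨x₀, hx₀mem, hmax⟩ :=
    hfin.toFinset.exists_max_image (fun x => ‖ψ x‖) ⟨x₁, hx₁mem⟩
  set M := ‖ψ x₀‖ with hM
  have hx₀S : ε ≤ ‖ψ x₀‖ ^ (2:ℕ) := by
    have := hx₀mem
    rw [Set.Finite.mem_toFinset] at this
    exact this
  have hMpos : 0 < M := by
    by_contra hc
    push_neg at hc
    have : M = 0 := le_antisymm hc (norm_nonneg _)
    rw [hM] at this
    rw [this] at hx₀S
    simp at hx₀S
    nlinarith
  have hall : ∀ x, ‖ψ x‖ ≤ M := by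
    intro x
    by_cases hx : x ∈ hfin.toFinset
    · exact hmax x hx
    · rw [Set.Finite.mem_toFinset] at hx
      simp only [Set.mem_setOf_eq, not_le] at hx
      have h1 : ‖ψ x‖ ^ (2:ℕ) ≤ M ^ (2:ℕ) := le_trans hx.le hx₀S
      nlinarith [norm_nonneg (ψ x)]
  have heq0 := heq x₀
  have hd0 : (0:ℝ) ≤ (d:ℝ) := Nat.cast_nonneg d
  have hnorm : (2 * (d:ℝ) - mu) * M = ‖nbrSum ψ x₀‖ := by
    rw [← heq0, norm_mul, Complex.norm_real, Real.norm_eq_abs,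
      abs_of_nonneg (by linarith)]
  have hnb : ‖nbrSum ψ x₀‖ ≤ 2 * (d:ℝ) * M := by
    rw [nbrSum]
    calc ‖∑ i : Fin d, (ψ (Function.update x₀ i (x₀ i + 1)) +
            ψ (Function.update x₀ i (x₀ i - 1)))‖
        ≤ ∑ i : Fin d, ‖ψ (Function.update x₀ i (x₀ i + 1)) +
            ψ (Function.update x₀ i (x₀ i - 1))‖ := norm_sum_le _ _
      _ ≤ ∑ _i : Fin d, (M + M) := Finset.sum_le_sum fun i _ =>
          (norm_add_le _ _).trans (add_le_add (hall _) (hall _))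
      _ = (d:ℝ) * (M + M) := by
          rw [Finset.sum_const, Finset.card_univ, Fintype.card_fin, nsmul_eq_mul]
      _ = 2 * (d:ℝ) * M := by ring
  nlinarith [hMpos, hnorm, hnb]

end L2

section Final
variable {d : ℕ} {s : ℝ}

lemma greenC_eigenrec (y : Fin d → ℤ) (hs : 0 < s) (hs2 : 2 * (d : ℝ) * s < 1)
    (x : Fin d → ℤ) :
    ((s⁻¹ : ℝ) : ℂ) * greenC d y s x
      = nbrSum (greenC d y s) x + (if x = y then 1 else 0) := by
  have h := greenC_recursion y hs hs2 x
  have hsne : (s : ℂ) ≠ 0 := by exact_mod_cast hs.ne'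
  rw [Complex.ofReal_inv]
  by_cases hxy : x = y
  · rw [if_pos hxy] at h ⊢
    field_simp
    linear_combination -h
  · rw [if_neg hxy] at h ⊢
    field_simp
    linear_combination -h

lemma greenC_at_y (y : Fin d → ℤ) : greenC d y s y = ((green d s 0 : ℝ) : ℂ) := by
  rw [greenC, sub_self]

lemma eigen_rep (hd : d = 1 ∨ d = 2) (y : Fin d → ℤ) (α mu : ℝ) (hmu : mu < 0)
    (ψ : (Fin d → ℤ) → ℂ) (hψ2 : Memℓp ψ 2)
    (heig : ∀ x, deltaHamiltonian d y α ψ x = (mu : ℂ) * ψ x) :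
    ψ = fun x => ((α : ℂ) * ψ y) * greenC d y ((2 * (d:ℝ) - mu)⁻¹) x := by
  have hd1 : (1:ℝ) ≤ (d:ℝ) := by rcases hd with rfl | rfl <;> norm_num
  set s : ℝ := (2 * (d:ℝ) - mu)⁻¹ with hsdef
  have hpos : 0 < 2 * (d:ℝ) - mu := by linarith
  have hs : 0 < s := inv_pos.mpr hpos
  have hsinv : s⁻¹ = 2 * (d:ℝ) - mu := by rw [hsdef, inv_inv]
  have hs2 : 2 * (d:ℝ) * s < 1 := by
    rw [hsdef, ← div_eq_mul_inv, div_lt_one hpos]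
    linarith
  set c : ℂ := (α : ℂ) * ψ y with hc
  set G := greenC d y s with hG
  have hGrec : ∀ x, ((2 * (d:ℝ) - mu : ℝ) : ℂ) * G x
      = nbrSum G x + (if x = y then 1 else 0) := by
    intro x
    have h := greenC_eigenrec y hs hs2 x
    rw [hsinv] at h
    exact h
  have hψrec : ∀ x, ((2 * (d:ℝ) - mu : ℝ) : ℂ) * ψ x
      = nbrSum ψ x + (α : ℂ) * (if x = y then ψ y else 0) := by
    intro x
    have h := heig x
    rw [deltaH_eq] at h
    push_cast
    linear_combination h
  set φ : (Fin d → ℤ) → ℂ := fun x => ψ x - c * G x with hφ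
  have hφker : ∀ x, ((2 * (d:ℝ) - mu : ℝ) : ℂ) * φ x = nbrSum φ x := by
    intro x
    have h1 := hψrec x
    have h2 := hGrec x
    have h3 : nbrSum φ x = nbrSum ψ x - c * nbrSum G x := by
      rw [hφ]
      rw [nbrSum_sub ψ (fun z => c * G z) x, nbrSum_const_mul c G x]
    have hφx : φ x = ψ x - c * G x := rfl
    rw [h3, hφx]
    by_cases hxy : x = y
    · rw [if_pos hxy] at h1 h2
      rw [hc] at *
      linear_combination h1 - (α : ℂ) * ψ y * h2
    · rw [if_neg hxy] at h1 h2
      linear_combination h1 - c * h2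
  have hφmem : Memℓp φ 2 := by
    have hg := (greenC_memℓ2 hd y hs hs2).const_smul c
    exact hψ2.sub hg
  have hφ0 : φ = 0 := kernel_trivial mu hmu φ hφmem hφker
  funext x
  have hx : φ x = 0 := by rw [hφ0]; rfl
  have := sub_eq_zero.mp hx
  simpa using this

end Final

/-- For `d ∈ {1,2}`, any `y ∈ ℤ^d` and any `α > 0`, the operator `-Δ - α δ_y` on
`ℓ²(ℤ^d)` has exactly one negative eigenvalue, and it is simple. -/
theorem delta_potential_unique_negative_eigenvalue
    (d : ℕ) (hd : d = 1 ∨ d = 2) (y : Fin d → ℤ) (α : ℝ) (hα : 0 < α) :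
    ∃ lam : ℝ, lam < 0 ∧
      (∃ ψ : (Fin d → ℤ) → ℂ, Memℓp ψ 2 ∧ ψ ≠ 0 ∧
        ∀ x, deltaHamiltonian d y α ψ x = (lam : ℂ) * ψ x) ∧
      (∀ mu : ℝ, mu < 0 →
        (∃ ψ : (Fin d → ℤ) → ℂ, Memℓp ψ 2 ∧ ψ ≠ 0 ∧
          ∀ x, deltaHamiltonian d y α ψ x = (mu : ℂ) * ψ x) → mu = lam) ∧
      (∀ ψ₁ ψ₂ : (Fin d → ℤ) → ℂ,
        Memℓp ψ₁ 2 → (∀ x, deltaHamiltonian d y α ψ₁ x = (lam : ℂ) * ψ₁ x) →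
        Memℓp ψ₂ 2 → (∀ x, deltaHamiltonian d y α ψ₂ x = (lam : ℂ) * ψ₂ x) →
        ψ₁ ≠ 0 → ∃ c : ℂ, ψ₂ = c • ψ₁) := by
  have hd1 : (1:ℝ) ≤ (d:ℝ) := by rcases hd with rfl | rfl <;> norm_num
  obtain ⟨t, ht0, ht2, htα⟩ := exists_sstar hd α hα
  set lam : ℝ := 2 * (d:ℝ) - t⁻¹ with hlam
  have htinv : 2 * (d:ℝ) < t⁻¹ := by
    rw [← one_div, lt_div_iff₀ ht0]
    linarith
  have hlamneg : lam < 0 := by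
    rw [hlam]
    linarith
  have hinvt : (2 * (d:ℝ) - lam)⁻¹ = t := by
    rw [hlam, sub_sub_cancel, inv_inv]
  have hgt0 : green d t 0 = 1 / α := by
    field_simp at htα ⊢
    linarith
  -- the eigenfunction
  set G : (Fin d → ℤ) → ℂ := greenC d y t with hGdef
  have hGy : G y = ((green d t 0 : ℝ) : ℂ) := greenC_at_y y
  have hGne : G ≠ 0 := by
    intro h
    have h2 : G y = 0 := by rw [h]; rfl
    rw [hGy, hgt0] at h2
    have : (1 / α : ℝ) = 0 := by exact_mod_cast h2
    have : (0:ℝ) < 1 / α := by positivity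
    linarith
  have hGeig : ∀ x, deltaHamiltonian d y α G x = (lam : ℂ) * G x := by
    intro x
    rw [deltaH_eq]
    have hrec := greenC_eigenrec y ht0 ht2 x
    have hnbr : nbrSum G x = ((t⁻¹ : ℝ) : ℂ) * G x - (if x = y then 1 else 0) := by
      rw [hGdef]
      linear_combination -hrec
    rw [hnbr, hGy]
    by_cases hxy : x = y
    · rw [if_pos hxy, if_pos hxy]
      rw [hlam]
      push_cast
      have : (α : ℂ) * ((green d t 0 : ℝ) : ℂ) = 1 := by
        rw [← Complex.ofReal_mul]
        exact_mod_cast congrArg Complex.ofReal htα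
      linear_combination -this
    · rw [if_neg hxy, if_neg hxy]
      rw [hlam]
      push_cast
      ring
  refine ⟨lam, hlamneg, ⟨G, greenC_memℓ2 hd y ht0 ht2, hGne, hGeig⟩, ?_, ?_⟩
  -- uniqueness of the eigenvalue
  · rintro mu hmu ⟨ψ, hψ2, hψne, heig⟩
    have hrep := eigen_rep hd y α mu hmu ψ hψ2 heig
    set smu : ℝ := (2 * (d:ℝ) - mu)⁻¹ with hsmudef
    have hpos : 0 < 2 * (d:ℝ) - mu := by linarith
    have hsmu : 0 < smu := inv_pos.mpr hpos
    have hsmu2 : 2 * (d:ℝ) * smu < 1 := by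
      rw [hsmudef, ← div_eq_mul_inv, div_lt_one hpos]
      linarith
    have hψy : ψ y ≠ 0 := by
      intro h0
      apply hψne
      rw [hrep]
      funext x
      simp [h0]
    have hyval : ψ y = (α : ℂ) * ψ y * ((green d smu 0 : ℝ) : ℂ) := by
      calc ψ y = (α : ℂ) * ψ y * greenC d y smu y := congrFun hrep y
        _ = (α : ℂ) * ψ y * ((green d smu 0 : ℝ) : ℂ) := by rw [greenC_at_y]
    have hαg : (α : ℝ) * green d smu 0 = 1 := by
      have h1 : ((α : ℂ) * ((green d smu 0 : ℝ) : ℂ) - 1) * ψ y = 0 := by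
        linear_combination -hyval
      rcases mul_eq_zero.mp h1 with h | h
      · have h2 : (α : ℂ) * ((green d smu 0 : ℝ) : ℂ) = 1 := by linear_combination h
        rw [← Complex.ofReal_mul] at h2
        exact_mod_cast h2
      · exact absurd h hψy
    have hgeq : green d smu 0 = green d t 0 := by
      have h1 : green d smu 0 = 1 / α := by
        field_simp at hαg ⊢
        linarith
      rw [h1, hgt0]
    have hst : smu = t := by
      rcases lt_trichotomy smu t with h | h | h
      · exact absurd hgeq (ne_of_lt (green_strictMono hsmu.le h ht2))
      · exact h
      · exact absurd hgeq.symm (ne_of_lt (green_strictMono ht0.le h hsmu2))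
    have : (2 * (d:ℝ) - mu)⁻¹ = t := by rw [← hsmudef, hst]
    have h2 : 2 * (d:ℝ) - mu = t⁻¹ := by
      rw [← this, inv_inv]
    rw [hlam]
    linarith
  -- simplicity
  · intro ψ₁ ψ₂ hψ₁2 heig₁ hψ₂2 heig₂ hψ₁ne
    have hrep₁ := eigen_rep hd y α lam hlamneg ψ₁ hψ₁2 heig₁
    have hrep₂ := eigen_rep hd y α lam hlamneg ψ₂ hψ₂2 heig₂
    rw [hinvt] at hrep₁ hrep₂
    have hψ₁y : ψ₁ y ≠ 0 := by
      intro h0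
      apply hψ₁ne
      rw [hrep₁]
      funext x
      simp [h0]
    refine ⟨ψ₂ y / ψ₁ y, ?_⟩
    funext x
    have h1 : ψ₁ x = (α : ℂ) * ψ₁ y * greenC d y t x := congrFun hrep₁ x
    have h2 : ψ₂ x = (α : ℂ) * ψ₂ y * greenC d y t x := congrFun hrep₂ x
    show ψ₂ x = (ψ₂ y / ψ₁ y) * ψ₁ x
    rw [h1, h2]
    field_simp
end P2
end

section
/- For every α ∈ (0,1], lim_{t→∞} t^{1/(2α)} · (1/(2π)) ∫_{−π}^{π} exp(−t (4 sin²(φ/2))^α) dφ = Γ(1/(2α)) / (2πα), where Γ is the Gamma function. -/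
open Real MeasureTheory Set Filter Topology

lemma aux_int_Ioi {p b : ℝ} (hp : 0 < p) (hb : 0 < b) :
    IntegrableOn (fun x : ℝ => Real.exp (-(b * x ^ p))) (Ioi 0) := by
  have h1 : IntegrableOn (fun y : ℝ => y ^ (1/p - 1) * Real.exp (-b * y)) (Ioi 0) := by
    have := integrableOn_rpow_mul_exp_neg_mul_rpow (s := 1/p - 1) (p := 1)
      (by have := one_div_pos.mpr hp; linarith) zero_lt_one hb
    simpa [Real.rpow_one] using this
  have h2 := (integrableOn_Ioi_comp_rpow_iff'
      (f := fun y : ℝ => y ^ (1/p - 1) * Real.exp (-b * y)) (p := p) hp.ne').mpr h1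
  refine h2.congr_fun (fun x hx => ?_) measurableSet_Ioi
  have hx0 : (0:ℝ) < x := hx
  have hxp : (0:ℝ) < x ^ p := Real.rpow_pos_of_pos hx0 p
  have hexp : p - 1 + p * (1 / p - 1) = 0 := by field_simp; ring
  beta_reduce
  rw [smul_eq_mul, ← Real.rpow_mul hx0.le, ← mul_assoc, ← Real.rpow_add hx0, hexp,
    Real.rpow_zero, one_mul, neg_mul]

lemma aux_integrable {p b : ℝ} (hp : 0 < p) (hb : 0 < b) :
    Integrable fun u : ℝ => Real.exp (-(b * |u| ^ p)) := by
  have hIoi : IntegrableOn (fun u : ℝ => Real.exp (-(b * |u| ^ p))) (Ioi 0) := by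
    refine (aux_int_Ioi hp hb).congr_fun (fun x hx => ?_) measurableSet_Ioi
    rw [abs_of_pos (mem_Ioi.mp hx)]
  rw [← integrableOn_univ, ← @Iio_union_Ici _ _ (0 : ℝ), integrableOn_union,
    integrableOn_Ici_iff_integrableOn_Ioi]
  refine ⟨?_, hIoi⟩
  rw [← (Measure.measurePreserving_neg (volume : Measure ℝ)).integrableOn_comp_preimage
      (Homeomorph.neg ℝ).measurableEmbedding]
  simpa [Function.comp_def, abs_neg] using hIoi

lemma aux_integral {p : ℝ} (hp : 0 < p) :
    ∫ u : ℝ, Real.exp (-(|u| ^ p)) = 2 * Real.Gamma (1/p + 1) := by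
  have h := integral_comp_abs (f := fun x : ℝ => Real.exp (-(x ^ p)))
  rw [h]
  congr 1
  simpa using integral_exp_neg_rpow hp

lemma aux_key {α : ℝ} (hα : 0 < α) {t : ℝ} (ht : 0 < t) (x : ℝ) :
    -t * (4 * Real.sin x ^ 2) ^ α
      = -((t ^ (1/(2*α)) * (2 * |Real.sin x|)) ^ (2*α)) := by
  have hp : (0:ℝ) < 2 * α := by linarith
  have h1 : (4 : ℝ) * Real.sin x ^ 2 = (2 * |Real.sin x|) ^ (2:ℕ) := by
    rw [mul_pow, sq_abs]; ring
  have hT : (t ^ (1/(2*α))) ^ (2*α) = t := by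
    rw [← Real.rpow_mul ht.le, one_div_mul_cancel hp.ne', Real.rpow_one]
  rw [h1, ← Real.rpow_natCast (2 * |Real.sin x|) 2, ← Real.rpow_mul (by positivity),
    Real.mul_rpow (Real.rpow_nonneg ht.le _) (by positivity), hT]
  push_cast
  ring_nf

lemma aux_lim {T : ℝ → ℝ} (hT : Tendsto T atTop atTop) (u : ℝ) :
    Tendsto (fun t => T t * (2 * |Real.sin (u / T t / 2)|)) atTop (𝓝 |u|) := by
  rcases eq_or_ne u 0 with rfl | hu
  · simpa using (tendsto_const_nhds : Tendsto (fun _ : ℝ => (0:ℝ)) atTop (𝓝 0))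
  · have hTpos : ∀ᶠ t in atTop, 0 < T t := hT.eventually_gt_atTop 0
    have hh : Tendsto (fun t => u / T t / 2) atTop (𝓝 0) := by
      have h2 := (hT.inv_tendsto_atTop).const_mul (u / 2)
      rw [mul_zero] at h2
      refine h2.congr fun t => ?_
      simp only [Pi.inv_apply, div_div, div_eq_mul_inv, mul_inv]
      ring
    have hne : ∀ᶠ t in atTop, u / T t / 2 ∈ ({0}ᶜ : Set ℝ) := by
      filter_upwards [hTpos] with t ht
      simp only [Set.mem_compl_iff, Set.mem_singleton_iff]
      positivity
    have hh' : Tendsto (fun t => u / T t / 2) atTop (𝓝[≠] (0:ℝ)) :=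
      tendsto_nhdsWithin_of_tendsto_nhds_of_eventually_within _ hh hne
    have hslope : Tendsto (fun x : ℝ => Real.sin x / x) (𝓝[≠] (0:ℝ)) (𝓝 1) := by
      have h := hasDerivAt_iff_tendsto_slope.mp (Real.hasDerivAt_sin 0)
      rw [Real.cos_zero] at h
      refine h.congr fun x => ?_
      simp [slope_def_field]
    have hq : Tendsto (fun t => Real.sin (u / T t / 2) / (u / T t / 2)) atTop (𝓝 1) :=
      hslope.comp hh'
    have hfin : Tendsto (fun t => |u| * |Real.sin (u / T t / 2) / (u / T t / 2)|)
        atTop (𝓝 |u|) := by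
      have := (hq.abs).const_mul |u|
      simpa using this
    refine hfin.congr' ?_
    filter_upwards [hTpos] with t ht
    have hT0 : T t ≠ 0 := ht.ne'
    rw [abs_div]
    have habs : |u / T t / 2| = |u| / T t / 2 := by
      rw [abs_div, abs_div, abs_of_pos ht, abs_two]
    rw [habs]
    field_simp [abs_ne_zero.mpr hu]

lemma aux_ptlim {α : ℝ} (hα : 0 < α) (u : ℝ) :
    Tendsto (fun t : ℝ => Real.exp (-t * (4 * Real.sin (u / t ^ (1/(2*α)) / 2) ^ 2) ^ α))
      atTop (𝓝 (Real.exp (-(|u| ^ (2*α))))) := by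
  have hp : (0:ℝ) < 2*α := by linarith
  have hT : Tendsto (fun t : ℝ => t ^ (1/(2*α))) atTop atTop :=
    tendsto_rpow_atTop (by positivity)
  rcases eq_or_ne u 0 with rfl | hu
  · have hfun : (fun t : ℝ =>
        Real.exp (-t * (4 * Real.sin (0 / t ^ (1/(2*α)) / 2) ^ 2) ^ α)) = fun _ => 1 := by
      funext t; simp [Real.zero_rpow hα.ne']
    rw [hfun, abs_zero, Real.zero_rpow hp.ne', neg_zero, Real.exp_zero]
    exact tendsto_const_nhds
  · have h1 := aux_lim hT u
    have h2 : Tendsto (fun t : ℝ =>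
        (t ^ (1/(2*α)) * (2 * |Real.sin (u / t ^ (1/(2*α)) / 2)|)) ^ (2*α))
        atTop (𝓝 (|u| ^ (2*α))) :=
      ((Real.continuousAt_rpow_const _ _ (Or.inl (abs_ne_zero.mpr hu))).tendsto).comp h1
    have h3 := (Real.continuous_exp.tendsto _).comp h2.neg
    refine h3.congr' ?_
    filter_upwards [eventually_gt_atTop (0:ℝ)] with t ht
    simp only [Function.comp_apply]
    rw [← aux_key hα ht]

/-- On-diagonal long-time asymptotics of the semigroup `e^{-t(-Δ)^α}` on `ℤ`
(Lemma 7.2): `p_α(t,x,x) ∼ Γ(1/(2α))/(2πα) · t^{-1/(2α)}` as `t → ∞`. -/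
theorem fracHeatKernel_diagonal_asymptotics (α : ℝ) (hα0 : 0 < α) (hα1 : α ≤ 1) :
    Filter.Tendsto
      (fun t : ℝ => t ^ (1 / (2 * α)) *
        ((1 / (2 * Real.pi)) *
          ∫ φ in (-Real.pi)..Real.pi, Real.exp (-t * (4 * Real.sin (φ / 2) ^ 2) ^ α)))
      Filter.atTop
      (nhds (Real.Gamma (1 / (2 * α)) / (2 * Real.pi * α))) := by
  have hπ := Real.pi_pos
  have hp : (0:ℝ) < 2 * α := by linarith
  have hb : (0:ℝ) < (2 / Real.pi) ^ (2*α) := Real.rpow_pos_of_pos (by positivity) _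
  set F : ℝ → ℝ → ℝ := fun t u =>
    (Set.Ioc (-(Real.pi * t ^ (1/(2*α)))) (Real.pi * t ^ (1/(2*α)))).indicator
      (fun u => Real.exp (-t * (4 * Real.sin (u / t ^ (1/(2*α)) / 2) ^ 2) ^ α)) u with hF
  -- dominated convergence
  have hmain : Tendsto (fun t => ∫ u, F t u) atTop
      (𝓝 (∫ u, Real.exp (-(|u| ^ (2*α))))) := by
    refine tendsto_integral_filter_of_dominated_convergence
      (fun u => Real.exp (-((2 / Real.pi) ^ (2*α) * |u| ^ (2*α)))) ?_ ?_
      (aux_integrable hp hb) ?_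
    · filter_upwards with t
      refine (Continuous.aestronglyMeasurable ?_).indicator measurableSet_Ioc
      exact Real.continuous_exp.comp <| (continuous_const.mul
        ((Real.continuous_rpow_const hα0.le).comp
          (continuous_const.mul ((Real.continuous_sin.comp
            ((continuous_id.div_const _).div_const _)).pow 2))))
    · filter_upwards [eventually_gt_atTop (0:ℝ)] with t ht
      refine Filter.Eventually.of_forall fun u => ?_
      set T := t ^ (1/(2*α)) with hTdef
      have hT : 0 < T := Real.rpow_pos_of_pos ht _
      by_cases hu : u ∈ Set.Ioc (-(Real.pi * T)) (Real.pi * T)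
      · rw [hF]
        simp only [Set.indicator_of_mem (show u ∈ Set.Ioc (-(Real.pi * t ^ (1/(2*α)))) (Real.pi * t ^ (1/(2*α))) from hu)]
        rw [← hTdef, Real.norm_eq_abs, Real.abs_exp, Real.exp_le_exp]
        set x := u / T / 2 with hxdef
        have huabs : |u| ≤ Real.pi * T := abs_le.mpr ⟨hu.1.le, hu.2⟩
        have habsx : |x| = |u| / T / 2 := by
          rw [hxdef, abs_div, abs_div, abs_of_pos hT, abs_two]
        have hxle : |x| ≤ Real.pi / 2 := by
          rw [habsx]
          have : |u| / T ≤ Real.pi := by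
            rw [div_le_iff₀ hT]; linarith [huabs]
          linarith
        have hsin : 2 / Real.pi * |x| ≤ |Real.sin x| := Real.mul_abs_le_abs_sin hxle
        have hchain : 2 / Real.pi * |u| ≤ T * (2 * |Real.sin x|) := by
          have h0 : 2 / Real.pi * |u| = T * (2 * (2 / Real.pi * (|u| / T / 2))) := by
            field_simp
          rw [h0, ← habsx]
          have := mul_le_mul_of_nonneg_left hsin (by norm_num : (0:ℝ) ≤ 2)
          exact mul_le_mul_of_nonneg_left this hT.le
        rw [aux_key hα0 ht, neg_le_neg_iff]
        calc (2 / Real.pi) ^ (2*α) * |u| ^ (2*α)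
            = (2 / Real.pi * |u|) ^ (2*α) := by
              rw [Real.mul_rpow (by positivity) (abs_nonneg u)]
          _ ≤ (T * (2 * |Real.sin x|)) ^ (2*α) :=
              Real.rpow_le_rpow (by positivity) hchain hp.le
      · rw [hF]
        simp only [Set.indicator_of_notMem (show u ∉ Set.Ioc (-(Real.pi * t ^ (1/(2*α)))) (Real.pi * t ^ (1/(2*α))) from hu)]
        simp [Real.exp_pos, (Real.exp_pos _).le]
    · refine Filter.Eventually.of_forall fun u => ?_
      have hev : ∀ᶠ t : ℝ in atTop,
          Real.exp (-t * (4 * Real.sin (u / t ^ (1/(2*α)) / 2) ^ 2) ^ α) = F t u := by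
        filter_upwards [(tendsto_rpow_atTop (by positivity : (0:ℝ) < 1/(2*α))).eventually_gt_atTop
          (|u| / Real.pi)] with t ht
        have : |u| < Real.pi * t ^ (1/(2*α)) := by
          rw [div_lt_iff₀ hπ] at ht; linarith [ht]
        have hmem : u ∈ Set.Ioc (-(Real.pi * t ^ (1/(2*α)))) (Real.pi * t ^ (1/(2*α))) := by
          rcases abs_lt.mp this with ⟨h1, h2⟩
          exact ⟨h1, h2.le⟩
        rw [hF]; simp only [Set.indicator_of_mem hmem]
      exact Filter.Tendsto.congr' hev (aux_ptlim hα0 u)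
  -- eventual equality with the original expression
  have heq : ∀ᶠ t : ℝ in atTop,
      (1 / (2 * Real.pi)) * ∫ u, F t u
      = t ^ (1 / (2 * α)) * ((1 / (2 * Real.pi)) *
        ∫ φ in (-Real.pi)..Real.pi, Real.exp (-t * (4 * Real.sin (φ / 2) ^ 2) ^ α)) := by
    filter_upwards [eventually_gt_atTop (0:ℝ)] with t ht
    set T := t ^ (1/(2*α)) with hTdef
    have hT : 0 < T := Real.rpow_pos_of_pos ht _
    have hle : -(Real.pi * T) ≤ Real.pi * T := by nlinarith
    rw [hF]
    rw [MeasureTheory.integral_indicator measurableSet_Ioc,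
      ← intervalIntegral.integral_of_le hle]
    rw [intervalIntegral.integral_comp_div
      (f := fun φ => Real.exp (-t * (4 * Real.sin (φ / 2) ^ 2) ^ α)) hT.ne']
    rw [mul_div_assoc, div_self hT.ne', mul_one, neg_div, mul_div_assoc, div_self hT.ne',
      mul_one, smul_eq_mul]
    ring
  have hval : (1 / (2 * Real.pi)) * ∫ u, Real.exp (-(|u| ^ (2*α)))
      = Real.Gamma (1 / (2 * α)) / (2 * Real.pi * α) := by
    rw [aux_integral hp, Real.Gamma_add_one (one_div_ne_zero hp.ne')]
    field_simp
  have hconv := hmain.const_mul (1 / (2 * Real.pi))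
  rw [hval] at hconv
  exact Filter.Tendsto.congr' heq hconv
end
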